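/- arXiv:1210.1042 — 5 statements merged into one kernel-verified Lean document; each statement's English description precedes it below -/
import Mathlib

section
/- If a subspace L ⊆ V ⊕ V* is isotropic with respect to the symmetric pairing ⟨(v₁,η₁),(v₂,η₂)⟩₊ = ½(η₁(v₂) + η₂(v₁)) and dim L = dim V, then L satisfies both characteristic equations: ρ(L)° = L ∩ V* and ρ*(L)° = L ∩ V. -/
open Module Submodule LinearMap

set_option synthInstance.maxHeartbeats 1000000
set_option maxHeartbeats 1000000

lemma finrank_map_fst_add_finrank_comap_inr {K V W : Type*} [Field K]
    [AddCommGroup V] [Module K V] [AddCommGroup W] [Module K W]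
    [FiniteDimensional K V] [FiniteDimensional K W] (L : Submodule K (V × W)) :
    finrank K (L.map (LinearMap.fst K V W)) + finrank K (L.comap (LinearMap.inr K V W))
      = finrank K L := by
  have h := LinearMap.finrank_range_add_finrank_ker ((LinearMap.fst K V W).domRestrict L)
  have hr : LinearMap.range ((LinearMap.fst K V W).domRestrict L)
      = L.map (LinearMap.fst K V W) := by
    ext x
    simp [LinearMap.mem_range, Submodule.mem_map]
  have e : LinearMap.ker ((LinearMap.fst K V W).domRestrict L)
      ≃ₗ[K] L.comap (LinearMap.inr K V W) := by
    refine
      { toFun := fun x => ⟨x.1.1.2, ?_⟩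
        map_add' := fun x y => rfl
        map_smul' := fun c x => rfl
        invFun := fun y => ⟨⟨(0, y.1), y.2⟩, rfl⟩
        left_inv := fun x => ?_
        right_inv := fun y => rfl }
    · have h1 : (x.1.1.1 : V) = 0 := x.2
      have : ((0 : V), x.1.1.2) = (x.1.1 : V × W) := by
        rw [Prod.ext_iff]; exact ⟨h1.symm, rfl⟩
      simpa [Submodule.mem_comap, LinearMap.inr_apply, this] using x.1.2
    · have h1 : (x.1.1.1 : V) = 0 := x.2
      apply Subtype.ext; apply Subtype.ext
      rw [Prod.ext_iff]; exact ⟨h1.symm, rfl⟩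
  have hk : finrank K (LinearMap.ker ((LinearMap.fst K V W).domRestrict L))
      = finrank K (L.comap (LinearMap.inr K V W)) := e.finrank_eq
  rw [hr, hk] at h
  exact h

lemma finrank_map_snd_add_finrank_comap_inl {K V W : Type*} [Field K]
    [AddCommGroup V] [Module K V] [AddCommGroup W] [Module K W]
    [FiniteDimensional K V] [FiniteDimensional K W] (L : Submodule K (V × W)) :
    finrank K (L.map (LinearMap.snd K V W)) + finrank K (L.comap (LinearMap.inl K V W))
      = finrank K L := by
  have h := LinearMap.finrank_range_add_finrank_ker ((LinearMap.snd K V W).domRestrict L)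
  have hr : LinearMap.range ((LinearMap.snd K V W).domRestrict L)
      = L.map (LinearMap.snd K V W) := by
    ext x
    simp [LinearMap.mem_range, Submodule.mem_map]
  have e : LinearMap.ker ((LinearMap.snd K V W).domRestrict L)
      ≃ₗ[K] L.comap (LinearMap.inl K V W) := by
    refine
      { toFun := fun x => ⟨x.1.1.1, ?_⟩
        map_add' := fun x y => rfl
        map_smul' := fun c x => rfl
        invFun := fun y => ⟨⟨(y.1, 0), y.2⟩, rfl⟩
        left_inv := fun x => ?_
        right_inv := fun y => rfl }
    · have h1 : (x.1.1.2 : W) = 0 := x.2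
      have : ((x.1.1.1 : V), (0 : W)) = (x.1.1 : V × W) := by
        rw [Prod.ext_iff]; exact ⟨rfl, h1.symm⟩
      simpa [Submodule.mem_comap, LinearMap.inl_apply, this] using x.1.2
    · have h1 : (x.1.1.2 : W) = 0 := x.2
      apply Subtype.ext; apply Subtype.ext
      rw [Prod.ext_iff]; exact ⟨rfl, h1.symm⟩
  have hk : finrank K (LinearMap.ker ((LinearMap.snd K V W).domRestrict L))
      = finrank K (L.comap (LinearMap.inl K V W)) := e.finrank_eq
  rw [hr, hk] at h
  exact h

/-- A Lagrangian subspace for the symmetric pairing `⟨,⟩₊` satisfies both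
characteristic equations. -/
theorem lagrangian_plus_characteristic {V : Type*} [AddCommGroup V] [Module ℝ V]
    [FiniteDimensional ℝ V] (L : Submodule ℝ (V × Module.Dual ℝ V))
    (hiso : ∀ p ∈ L, ∀ q ∈ L,
      (1/2 : ℝ) * (p.2 q.1 + q.2 p.1) = 0)
    (hdim : Module.finrank ℝ L = Module.finrank ℝ V) :
    (Submodule.map (LinearMap.fst ℝ V (Module.Dual ℝ V)) L).dualAnnihilator
        = Submodule.comap (LinearMap.inr ℝ V (Module.Dual ℝ V)) L
    ∧ (Submodule.map (LinearMap.snd ℝ V (Module.Dual ℝ V)) L).dualCoannihilator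
        = Submodule.comap (LinearMap.inl ℝ V (Module.Dual ℝ V)) L := by
  set E := Submodule.map (LinearMap.fst ℝ V (Module.Dual ℝ V)) L with hE
  set F := Submodule.comap (LinearMap.inr ℝ V (Module.Dual ℝ V)) L with hF
  set G := Submodule.map (LinearMap.snd ℝ V (Module.Dual ℝ V)) L with hG
  set H := Submodule.comap (LinearMap.inl ℝ V (Module.Dual ℝ V)) L with hH
  -- isotropy inclusions
  have hFle : F ≤ E.dualAnnihilator := by
    intro η hη
    rw [Submodule.mem_dualAnnihilator]
    rintro w ⟨p, hp, rfl⟩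
    have := hiso ((0 : V), η) hη p hp
    simp only [map_zero] at this
    have h2 : η p.1 = 0 := by linarith
    exact h2
  have hHle : H ≤ G.dualCoannihilator := by
    intro v hv
    rw [Submodule.mem_dualCoannihilator]
    rintro ξ ⟨p, hp, rfl⟩
    have := hiso p hp (v, (0 : Module.Dual ℝ V)) hv
    simp only [LinearMap.zero_apply] at this
    have h2 : p.2 v = 0 := by linarith
    exact h2
  -- dimension counts
  have hEF : finrank ℝ E + finrank ℝ F = finrank ℝ V := by
    rw [hE, hF, finrank_map_fst_add_finrank_comap_inr L, hdim]
  have hGH : finrank ℝ G + finrank ℝ H = finrank ℝ V := by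
    rw [hG, hH, finrank_map_snd_add_finrank_comap_inl L, hdim]
  have hEann : finrank ℝ E + finrank ℝ E.dualAnnihilator = finrank ℝ V := by
    have h1 : finrank ℝ (V ⧸ E) = finrank ℝ E.dualAnnihilator :=
      LinearEquiv.finrank_eq (Subspace.quotEquivAnnihilator E)
    have h2 := Submodule.finrank_quotient_add_finrank E
    omega
  have hGco : finrank ℝ G + finrank ℝ G.dualCoannihilator = finrank ℝ V :=
    Subspace.finrank_add_finrank_dualCoannihilator_eq G
  constructor
  · exact (Submodule.eq_of_le_of_finrank_eq hFle (by omega)).symm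
  · exact (Submodule.eq_of_le_of_finrank_eq hHle (by omega)).symm
end

section
/- If a subspace L ⊆ V ⊕ V* is isotropic with respect to the antisymmetric pairing ⟨(v₁,η₁),(v₂,η₂)⟩₋ = ½(η₁(v₂) − η₂(v₁)) and dim L = dim V, then L satisfies both characteristic equations: ρ(L)° = L ∩ V* and ρ*(L)° = L ∩ V. -/
open Module

/-- Rank-nullity for the first projection restricted to a submodule of a product. -/
lemma aux_fst_rank {V W : Type*} [AddCommGroup V] [Module ℝ V]
    [AddCommGroup W] [Module ℝ W] [FiniteDimensional ℝ V] [FiniteDimensional ℝ W]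
    (L : Submodule ℝ (V × W)) :
    finrank ℝ (Submodule.comap (LinearMap.inr ℝ V W) L)
      + finrank ℝ (Submodule.map (LinearMap.fst ℝ V W) L)
      = finrank ℝ L := by
  have h := LinearMap.finrank_range_add_finrank_ker (V := ↥L) (V₂ := V)
    ((LinearMap.fst ℝ V W).comp L.subtype)
  rw [LinearMap.range_comp, Submodule.range_subtype] at h
  rw [add_comm, ← h]
  congr 1
  refine (LinearEquiv.finrank_eq ?_).symm
  exact
    { toFun := fun x => ⟨x.1.1.2, by
        have hx : (x.1 : V × W).1 = 0 := x.2
        have he : ((0 : V), (x.1 : V × W).2) = (x.1 : V × W) := by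
          ext <;> simp [hx]
        simpa [Submodule.mem_comap, he] using x.1.2⟩
      invFun := fun η => ⟨⟨((0 : V), η.1), η.2⟩, rfl⟩
      map_add' := by intros; rfl
      map_smul' := by intros; rfl
      left_inv := by
        rintro ⟨⟨⟨v, η⟩, hmem⟩, hv⟩
        have hv' : v = 0 := hv
        subst hv'
        rfl
      right_inv := fun η => rfl }

/-- Rank-nullity for the second projection restricted to a submodule of a product. -/
lemma aux_snd_rank {V W : Type*} [AddCommGroup V] [Module ℝ V]
    [AddCommGroup W] [Module ℝ W] [FiniteDimensional ℝ V] [FiniteDimensional ℝ W]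
    (L : Submodule ℝ (V × W)) :
    finrank ℝ (Submodule.comap (LinearMap.inl ℝ V W) L)
      + finrank ℝ (Submodule.map (LinearMap.snd ℝ V W) L)
      = finrank ℝ L := by
  have h := LinearMap.finrank_range_add_finrank_ker (V := ↥L) (V₂ := W)
    ((LinearMap.snd ℝ V W).comp L.subtype)
  rw [LinearMap.range_comp, Submodule.range_subtype] at h
  rw [add_comm, ← h]
  congr 1
  refine (LinearEquiv.finrank_eq ?_).symm
  exact
    { toFun := fun x => ⟨x.1.1.1, by
        have hx : (x.1 : V × W).2 = 0 := x.2
        have he : ((x.1 : V × W).1, (0 : W)) = (x.1 : V × W) := by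
          ext <;> simp [hx]
        simpa [Submodule.mem_comap, he] using x.1.2⟩
      invFun := fun v => ⟨⟨(v.1, (0 : W)), v.2⟩, rfl⟩
      map_add' := by intros; rfl
      map_smul' := by intros; rfl
      left_inv := by
        rintro ⟨⟨⟨v, η⟩, hmem⟩, hη⟩
        have hη' : η = 0 := hη
        subst hη'
        rfl
      right_inv := fun v => rfl }

/-- A Lagrangian subspace for the antisymmetric pairing `⟨,⟩₋` satisfies both
characteristic equations. -/
theorem lagrangian_minus_characteristic {V : Type*} [AddCommGroup V] [Module ℝ V]
    [FiniteDimensional ℝ V] (L : Submodule ℝ (V × Module.Dual ℝ V))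
    (hiso : ∀ p ∈ L, ∀ q ∈ L,
      (1/2 : ℝ) * (p.2 q.1 - q.2 p.1) = 0)
    (hdim : Module.finrank ℝ L = Module.finrank ℝ V) :
    (Submodule.map (LinearMap.fst ℝ V (Module.Dual ℝ V)) L).dualAnnihilator
        = Submodule.comap (LinearMap.inr ℝ V (Module.Dual ℝ V)) L
    ∧ (Submodule.map (LinearMap.snd ℝ V (Module.Dual ℝ V)) L).dualCoannihilator
        = Submodule.comap (LinearMap.inl ℝ V (Module.Dual ℝ V)) L := by
  have hiso' : ∀ p ∈ L, ∀ q ∈ L, p.2 q.1 = q.2 p.1 := by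
    intro p hp q hq
    have := hiso p hp q hq
    have h2 : (1/2 : ℝ) ≠ 0 := by norm_num
    have := (mul_eq_zero.mp this).resolve_left h2
    linarith
  constructor
  · have hle : Submodule.comap (LinearMap.inr ℝ V (Module.Dual ℝ V)) L
        ≤ (Submodule.map (LinearMap.fst ℝ V (Module.Dual ℝ V)) L).dualAnnihilator := by
      intro η hη
      rw [Submodule.mem_dualAnnihilator]
      rintro v ⟨⟨w, ξ⟩, hwξ, rfl⟩
      have := hiso' ((0 : V), η) hη (w, ξ) hwξ
      simpa using this
    refine (Submodule.eq_of_le_of_finrank_le hle ?_).symm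
    have h1 := aux_fst_rank L
    set K := Submodule.map (LinearMap.fst ℝ V (Module.Dual ℝ V)) L with hK
    have h3 := LinearEquiv.finrank_eq (R := ℝ) (M := V ⧸ K) (N := K.dualAnnihilator) (Subspace.quotEquivAnnihilator K)
    have h4 := Submodule.finrank_quotient_add_finrank K
    omega
  · have hle : Submodule.comap (LinearMap.inl ℝ V (Module.Dual ℝ V)) L
        ≤ (Submodule.map (LinearMap.snd ℝ V (Module.Dual ℝ V)) L).dualCoannihilator := by
      intro v hv
      rw [Submodule.mem_dualCoannihilator]
      rintro η ⟨⟨w, ξ⟩, hwξ, rfl⟩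
      have := hiso' (w, ξ) hwξ (v, (0 : Module.Dual ℝ V)) hv
      simpa using this
    refine (Submodule.eq_of_le_of_finrank_le hle ?_).symm
    have h1 := aux_snd_rank L
    set K := Submodule.map (LinearMap.snd ℝ V (Module.Dual ℝ V)) L with hK
    have h2 := Subspace.finrank_add_finrank_dualCoannihilator_eq K
    omega
end

section
/- Given a subspace F ⊆ V* and a linear map Π : F → F*, the set L = {(v,η) ∈ V ⊕ V* : η ∈ F and the functional on F given by ξ ↦ ξ(v) − Π(η)(ξ) is zero} is a backward LD structure, i.e., ρ*(L)° = L ∩ V. -/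
/-- The graph construction `(F, Π) ↦ L = {(v,η) : η ∈ F, ξ(v) = Π(η)(ξ) ∀ ξ ∈ F}`
yields a backward LD structure: `ρ*(L)° = L ∩ V`. -/
theorem pair_gives_backward_LD {V : Type*} [AddCommGroup V] [Module ℝ V]
    [FiniteDimensional ℝ V] (F : Submodule ℝ (Module.Dual ℝ V))
    (Pi : F →ₗ[ℝ] Module.Dual ℝ F)
    (L : Submodule ℝ (V × Module.Dual ℝ V))
    (hL : ∀ p : V × Module.Dual ℝ V,
      p ∈ L ↔ ∃ hη : p.2 ∈ F, ∀ ξ : F, (ξ : Module.Dual ℝ V) p.1 = Pi ⟨p.2, hη⟩ ξ) :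
    (Submodule.map (LinearMap.snd ℝ V (Module.Dual ℝ V)) L).dualCoannihilator
        = Submodule.comap (LinearMap.inl ℝ V (Module.Dual ℝ V)) L := by
  -- every functional on F is evaluation at some point of V
  have hsurj : ∀ φ : Module.Dual ℝ F, ∃ w : V, ∀ ζ : F,
      (ζ : Module.Dual ℝ V) w = φ ζ := by
    intro φ
    obtain ⟨Φ, hΦ⟩ := LinearMap.dualMap_surjective_of_injective
      (K := ℝ) (V₁ := F) (Submodule.injective_subtype F) φ
    refine ⟨(Module.evalEquiv ℝ V).symm Φ, fun ζ => ?_⟩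
    have h1 : Module.Dual.eval ℝ V ((Module.evalEquiv ℝ V).symm Φ) = Φ :=
      (Module.evalEquiv ℝ V).apply_symm_apply Φ
    have h2 := congrFun (congrArg DFunLike.coe hΦ) ζ
    simp only [LinearMap.dualMap_apply, Submodule.subtype_apply] at h2
    calc (ζ : Module.Dual ℝ V) ((Module.evalEquiv ℝ V).symm Φ)
        = Module.Dual.eval ℝ V ((Module.evalEquiv ℝ V).symm Φ) ζ := rfl
      _ = Φ ζ := by rw [h1]
      _ = φ ζ := h2
  ext v
  simp only [Submodule.mem_dualCoannihilator, Submodule.mem_comap, LinearMap.inl_apply]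
  constructor
  · intro h
    rw [hL]
    refine ⟨F.zero_mem, fun ξ => ?_⟩
    have hPi0 : Pi ⟨(0 : Module.Dual ℝ V), F.zero_mem⟩ = 0 := by
      have h0 : (⟨(0 : Module.Dual ℝ V), F.zero_mem⟩ : F) = 0 := rfl
      rw [h0, map_zero]
    rw [hPi0]
    obtain ⟨w, hw⟩ := hsurj (Pi ξ)
    have hwL : ((w, (ξ : Module.Dual ℝ V)) : V × Module.Dual ℝ V) ∈ L := by
      rw [hL]
      exact ⟨ξ.2, fun ζ => by rw [hw ζ]⟩
    have := h (ξ : Module.Dual ℝ V) ⟨(w, (ξ : Module.Dual ℝ V)), hwL, rfl⟩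
    simpa using this
  · intro h η ⟨p, hp, hpη⟩
    rw [hL] at h
    obtain ⟨hη, _⟩ := (hL p).mp hp
    obtain ⟨h0, hval0⟩ := h
    have hz : Pi ⟨(0 : Module.Dual ℝ V), h0⟩ = 0 := by
      rw [show (⟨(0 : Module.Dual ℝ V), h0⟩ : F) = 0 from rfl, map_zero]
    have := hval0 ⟨p.2, hη⟩
    simpa [← hpη, hz] using this
end

section
/- If L is a forward LD structure on V, then there exists a symmetric bilinear form Ψ on V and a Dirac structure L₁ on V such that L = {(v, η + Ψ(v,·)) : (v,η) ∈ L₁}. In other words, every forward LD structure is a gauge deformation of a Dirac structure by a symmetric bilinear form. -/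
set_option maxHeartbeats 1000000 in
private lemma forward_LD_finrank_aux {V : Type*} [AddCommGroup V] [Module ℝ V]
    [FiniteDimensional ℝ V] (L : Submodule ℝ (V × Module.Dual ℝ V))
    (h : (Submodule.map (LinearMap.fst ℝ V (Module.Dual ℝ V)) L).dualAnnihilator
        = Submodule.comap (LinearMap.inr ℝ V (Module.Dual ℝ V)) L) :
    Module.finrank ℝ L = Module.finrank ℝ V := by
  classical
  set E : Submodule ℝ V := Submodule.map (LinearMap.fst ℝ V (Module.Dual ℝ V)) L with hE
  have hmemE : ∀ x ∈ L, (x : V × Module.Dual ℝ V).1 ∈ E := fun x hx => ⟨x, hx, rfl⟩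
  have hmemE' : ∀ η : Module.Dual ℝ V, η ∈ E.dualAnnihilator ↔ (0, η) ∈ L := by
    rw [h]; intro η; exact Iff.rfl
  set f : L →ₗ[ℝ] E :=
    LinearMap.codRestrict E ((LinearMap.fst ℝ V (Module.Dual ℝ V)).domRestrict L)
      (fun x => hmemE x x.2) with hf
  have hfval : ∀ x : L, ((f x : E) : V) = (x : V × Module.Dual ℝ V).1 := fun x => rfl
  have hfsurj : LinearMap.range f = ⊤ := by
    rw [LinearMap.range_eq_top]
    rintro ⟨e, x, hxL, hx1⟩
    exact ⟨⟨x, hxL⟩, by ext; exact hx1⟩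
  obtain ⟨σ, hσ⟩ := f.exists_rightInverse_of_surjective hfsurj
  have hσ1 : ∀ e : E, ((σ e : L) : V × Module.Dual ℝ V).1 = (e : V) := fun e => by
    have h1 : f (σ e) = e := by
      have := congrArg (fun g => g e) hσ; simpa using this
    rw [← hfval (σ e), h1]
  set τ : E →ₗ[ℝ] (V × Module.Dual ℝ V) := L.subtype.comp σ with hτ
  have hτ1 : ∀ e : E, (τ e).1 = (e : V) := fun e => hσ1 e
  have hτmem : ∀ e : E, τ e ∈ L := fun e => (σ e : L).2
  have hτinj : Function.Injective τ := by
    intro a b hab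
    apply Subtype.ext
    rw [← hτ1 a, ← hτ1 b, hab]
  clear_value τ f E
  clear hσ hτ hf hE hfval hfsurj f
  have hsup : LinearMap.range τ
      ⊔ Submodule.map (LinearMap.inr ℝ V (Module.Dual ℝ V)) E.dualAnnihilator = L := by
    apply le_antisymm
    · apply sup_le
      · rintro x ⟨e, rfl⟩; exact hτmem e
      · rintro x ⟨η, hη, rfl⟩; exact (hmemE' η).mp hη
    · intro x hx
      have hx1E : x.1 ∈ E := hmemE x hx
      have hη : x.2 - (τ ⟨x.1, hx1E⟩).2 ∈ E.dualAnnihilator := by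
        rw [hmemE']
        have heq : ((0 : V), x.2 - (τ ⟨x.1, hx1E⟩).2) = x - τ ⟨x.1, hx1E⟩ := by
          refine Prod.ext ?_ rfl
          simp [hτ1]
        rw [heq]
        exact Submodule.sub_mem L hx (hτmem _)
      apply Submodule.mem_sup.mpr
      refine ⟨τ ⟨x.1, hx1E⟩, ⟨_, rfl⟩,
        (0, x.2 - (τ ⟨x.1, hx1E⟩).2), ⟨_, hη, rfl⟩, ?_⟩
      refine Prod.ext ?_ ?_
      · simp [hτ1]
      · simp
  have hinf : LinearMap.range τ
      ⊓ Submodule.map (LinearMap.inr ℝ V (Module.Dual ℝ V)) E.dualAnnihilator = ⊥ := by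
    rw [eq_bot_iff]
    rintro x ⟨hA, hB⟩
    obtain ⟨e, he⟩ := hA
    obtain ⟨η, hη, hx⟩ := hB
    have h0 : (e : V) = 0 := by
      rw [← hτ1 e, he, ← hx]
      rfl
    have he0 : e = 0 := Subtype.ext h0
    rw [← he, he0, map_zero]
    exact Submodule.zero_mem ⊥
  have hsum := Submodule.finrank_sup_add_finrank_inf_eq (LinearMap.range τ)
    (Submodule.map (LinearMap.inr ℝ V (Module.Dual ℝ V)) E.dualAnnihilator)
  rw [hsup, hinf, finrank_bot, add_zero] at hsum
  have h1 : Module.finrank ℝ (LinearMap.range τ) = Module.finrank ℝ E :=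
    LinearMap.finrank_range_of_inj hτinj
  have h2 : Module.finrank ℝ
      (Submodule.map (LinearMap.inr ℝ V (Module.Dual ℝ V)) E.dualAnnihilator)
      = Module.finrank ℝ E.dualAnnihilator :=
    (Submodule.equivMapOfInjective _ LinearMap.inr_injective E.dualAnnihilator).finrank_eq.symm
  have h4 : Module.finrank ℝ E.dualAnnihilator = Module.finrank ℝ (V ⧸ E) :=
    (LinearEquiv.finrank_eq (Subspace.quotEquivAnnihilator E)).symm
  have h5 : Module.finrank ℝ E + Module.finrank ℝ (V ⧸ E) = Module.finrank ℝ V := by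
    rw [add_comm]; exact Submodule.finrank_quotient_add_finrank E
  omega

set_option maxHeartbeats 4000000 in
/-- Every forward LD structure is a gauge deformation of a Dirac structure by a
symmetric bilinear form. -/
theorem forward_LD_is_deformed_dirac {V : Type*} [AddCommGroup V] [Module ℝ V]
    [FiniteDimensional ℝ V] (L : Submodule ℝ (V × Module.Dual ℝ V))
    (h : (Submodule.map (LinearMap.fst ℝ V (Module.Dual ℝ V)) L).dualAnnihilator
        = Submodule.comap (LinearMap.inr ℝ V (Module.Dual ℝ V)) L) :
    ∃ (Ψ : V →ₗ[ℝ] V →ₗ[ℝ] ℝ) (L₁ : Submodule ℝ (V × Module.Dual ℝ V)),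
      (∀ v w : V, Ψ v w = Ψ w v)
      ∧ Module.finrank ℝ L₁ = Module.finrank ℝ V
      ∧ (∀ p ∈ L₁, ∀ q ∈ L₁, (1/2 : ℝ) * (p.2 q.1 + q.2 p.1) = 0)
      ∧ (∀ p : V × Module.Dual ℝ V, p ∈ L ↔ ∃ q ∈ L₁, p = (q.1, q.2 + Ψ q.1)) := by
  classical
  have hfin : Module.finrank ℝ L = Module.finrank ℝ V := forward_LD_finrank_aux L h
  set E : Submodule ℝ V := Submodule.map (LinearMap.fst ℝ V (Module.Dual ℝ V)) L with hE
  have hmemE : ∀ x ∈ L, (x : V × Module.Dual ℝ V).1 ∈ E := fun x hx => ⟨x, hx, rfl⟩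
  have hmemE' : ∀ η : Module.Dual ℝ V, η ∈ E.dualAnnihilator ↔ (0, η) ∈ L := by
    rw [h]; intro η; exact Iff.rfl
  -- a projection of V onto E
  obtain ⟨F, hF⟩ := Submodule.exists_isCompl E
  set π : V →ₗ[ℝ] E := E.linearProjOfIsCompl F hF with hπ
  have hπE : ∀ v (hv : v ∈ E), π v = ⟨v, hv⟩ := fun v hv =>
    Submodule.linearProjOfIsCompl_apply_left hF ⟨v, hv⟩
  -- the projection L → E and a right inverse σ
  set f : L →ₗ[ℝ] E :=
    LinearMap.codRestrict E ((LinearMap.fst ℝ V (Module.Dual ℝ V)).domRestrict L)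
      (fun x => hmemE x x.2) with hf
  have hfval : ∀ x : L, ((f x : E) : V) = (x : V × Module.Dual ℝ V).1 := fun x => rfl
  have hfsurj : LinearMap.range f = ⊤ := by
    rw [LinearMap.range_eq_top]
    rintro ⟨e, x, hxL, hx1⟩
    exact ⟨⟨x, hxL⟩, by ext; exact hx1⟩
  obtain ⟨σ, hσ⟩ := f.exists_rightInverse_of_surjective hfsurj
  have hσ1 : ∀ e : E, ((σ e : L) : V × Module.Dual ℝ V).1 = (e : V) := fun e => by
    have h1 : f (σ e) = e := by
      have := congrArg (fun g => g e) hσ; simpa using this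
    rw [← hfval (σ e), h1]
  -- the bilinear form B'
  set B' : V →ₗ[ℝ] V →ₗ[ℝ] ℝ := LinearMap.mk₂ ℝ
      (fun v w => ((σ (π v) : L) : V × Module.Dual ℝ V).2 ((π w : E) : V))
      (fun v v' w => by simp)
      (fun c v w => by simp)
      (fun v w w' => by simp)
      (fun c v w => by simp) with hB'
  have hB'apply : ∀ v w : V,
      B' v w = ((σ (π v) : L) : V × Module.Dual ℝ V).2 ((π w : E) : V) := fun v w => rfl
  refine ⟨(1/2 : ℝ) • (B' + B'.flip), ?_⟩
  set Ψ : V →ₗ[ℝ] V →ₗ[ℝ] ℝ := (1/2 : ℝ) • (B' + B'.flip) with hΨ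
  have hΨapply : ∀ v w : V, Ψ v w = (1/2 : ℝ) * (B' v w + B' w v) := by
    intro v w; simp [hΨ]; ring
  -- the gauge transformations
  set G : (V × Module.Dual ℝ V) →ₗ[ℝ] (V × Module.Dual ℝ V) :=
    (LinearMap.fst ℝ V (Module.Dual ℝ V)).prod
      (LinearMap.snd ℝ V (Module.Dual ℝ V) - Ψ.comp (LinearMap.fst ℝ V (Module.Dual ℝ V)))
    with hG
  set G' : (V × Module.Dual ℝ V) →ₗ[ℝ] (V × Module.Dual ℝ V) :=
    (LinearMap.fst ℝ V (Module.Dual ℝ V)).prod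
      (LinearMap.snd ℝ V (Module.Dual ℝ V) + Ψ.comp (LinearMap.fst ℝ V (Module.Dual ℝ V)))
    with hG'
  have hGapply : ∀ x : V × Module.Dual ℝ V, G x = (x.1, x.2 - Ψ x.1) := fun x => rfl
  have hG'apply : ∀ x : V × Module.Dual ℝ V, G' x = (x.1, x.2 + Ψ x.1) := fun x => rfl
  clear_value G' G Ψ B' f π E
  clear hσ hG hG' hΨ hB' hf hπ hE
  have hGG' : ∀ x : V × Module.Dual ℝ V, G' (G x) = x := by
    intro x
    rw [hGapply, hG'apply]
    simp
  have hGinj : Function.Injective G := Function.LeftInverse.injective hGG'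
  -- key evaluation lemma
  have key2 : ∀ x ∈ L, ∀ w, w ∈ E →
      (x : V × Module.Dual ℝ V).2 w = ((σ (π x.1) : L) : V × Module.Dual ℝ V).2 w := by
    intro x hxL w hwE
    have hx1E : x.1 ∈ E := hmemE x hxL
    set a : V × Module.Dual ℝ V := ((σ (π x.1) : L) : V × Module.Dual ℝ V) with ha
    have haL : a ∈ L := (σ (π x.1) : L).2
    have ha1 : a.1 = x.1 := by rw [ha, hσ1, hπE x.1 hx1E]
    have hdiff : x - a ∈ L := Submodule.sub_mem L hxL haL
    have heq : ((0 : V), x.2 - a.2) = x - a := by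
      refine Prod.ext ?_ rfl
      simp [ha1]
    have hmem : x.2 - a.2 ∈ E.dualAnnihilator := by
      rw [hmemE', heq]; exact hdiff
    have := (Submodule.mem_dualAnnihilator _).mp hmem w hwE
    have hsub : x.2 w - a.2 w = 0 := by simpa using this
    linarith
  have key : ∀ x ∈ L, ∀ y ∈ L,
      (x : V × Module.Dual ℝ V).2 y.1 + y.2 x.1 = 2 * Ψ x.1 y.1 := by
    intro x hx y hy
    have hx1E : x.1 ∈ E := hmemE x hx
    have hy1E : y.1 ∈ E := hmemE y hy
    have e1 : x.2 y.1 = B' x.1 y.1 := by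
      rw [key2 x hx y.1 hy1E, hB'apply, hπE y.1 hy1E]
    have e2 : y.2 x.1 = B' y.1 x.1 := by
      rw [key2 y hy x.1 hx1E, hB'apply, hπE x.1 hx1E]
    rw [e1, e2, hΨapply]; ring
  refine ⟨Submodule.map G L, ?_, ?_, ?_, ?_⟩
  · intro v w; rw [hΨapply, hΨapply]; ring
  · -- finrank
    have h1 : Module.finrank ℝ (Submodule.map G L) = Module.finrank ℝ L :=
      (LinearEquiv.finrank_eq (Submodule.equivMapOfInjective G hGinj L)).symm
    rw [h1]
    exact hfin
  · -- isotropy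
    rintro p ⟨x, hxL, rfl⟩ q ⟨y, hyL, rfl⟩
    have hk := key x hxL y hyL
    have hs : Ψ x.1 y.1 = Ψ y.1 x.1 := by rw [hΨapply, hΨapply]; ring
    rw [hGapply, hGapply]
    simp only [LinearMap.sub_apply]
    rw [← hs] at *
    linarith
  · -- membership
    intro p
    constructor
    · intro hp
      refine ⟨G p, Submodule.mem_map_of_mem hp, ?_⟩
      rw [hGapply]
      refine Prod.ext rfl ?_
      simp
    · rintro ⟨q, ⟨x, hxL, rfl⟩, rfl⟩
      have h1 : ((G x).1, (G x).2 + Ψ (G x).1) = G' (G x) := (hG'apply (G x)).symm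
      rw [h1, hGG']
      exact hxL
end

section
/- A subspace L ⊆ V ⊕ V* is a separable Dirac structure (η₁(v₂) = 0 for all (v₁,η₁),(v₂,η₂) ∈ L, and dim L = dim V, and L isotropic for ⟨,⟩₊) if and only if L = K ⊕ K° for some subspace K ⊆ V, i.e., L = {(v,η) : v ∈ K, η ∈ K°}. -/
/-- A submodule product `p.prod q` is linearly equivalent to `p × q`. -/
def subProdEquiv {R M N : Type*} [CommRing R] [AddCommGroup M] [AddCommGroup N]
    [Module R M] [Module R N] (p : Submodule R M) (q : Submodule R N) :
    (p.prod q) ≃ₗ[R] p × q where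
  toFun x := (⟨(x : M × N).1, x.2.1⟩, ⟨(x : M × N).2, x.2.2⟩)
  invFun y := ⟨(y.1.1, y.2.1), ⟨y.1.2, y.2.2⟩⟩
  left_inv x := rfl
  right_inv y := rfl
  map_add' x y := rfl
  map_smul' c x := rfl

/-- `L` is a separable Dirac structure iff `L = K ⊕ K°` for some subspace `K ⊆ V`. -/
theorem separable_dirac_iff_product {V : Type*} [AddCommGroup V] [Module ℝ V]
    [FiniteDimensional ℝ V] (L : Submodule ℝ (V × Module.Dual ℝ V)) :
    ((∀ p ∈ L, ∀ q ∈ L, p.2 q.1 = 0)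
      ∧ Module.finrank ℝ L = Module.finrank ℝ V
      ∧ (∀ p ∈ L, ∀ q ∈ L, (1/2 : ℝ) * (p.2 q.1 + q.2 p.1) = 0))
    ↔ (∃ K : Submodule ℝ V,
        ∀ p : V × Module.Dual ℝ V, p ∈ L ↔ p.1 ∈ K ∧ p.2 ∈ K.dualAnnihilator) := by
  have hfr : ∀ K : Submodule ℝ V,
      Module.finrank ℝ (K.prod K.dualAnnihilator) = Module.finrank ℝ V := by
    intro K
    have e1 : Module.finrank ℝ (K.prod K.dualAnnihilator) =
        Module.finrank ℝ (K × K.dualAnnihilator) :=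
      LinearEquiv.finrank_eq (subProdEquiv K K.dualAnnihilator)
    haveI : Module.Free ℝ K.dualAnnihilator :=
      Module.Free.of_divisionRing (K := ℝ) (V := K.dualAnnihilator)
    rw [e1, Module.finrank_prod]
    have h1 : Module.finrank ℝ (V ⧸ K) + Module.finrank ℝ K = Module.finrank ℝ V :=
      Submodule.finrank_quotient_add_finrank K
    have h2 : Module.finrank ℝ K.dualAnnihilator = Module.finrank ℝ (V ⧸ K) :=
      (LinearEquiv.finrank_eq (Subspace.quotEquivAnnihilator K)).symm
    omega
  constructor
  · rintro ⟨h1, h2, -⟩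
    set K : Submodule ℝ V := L.map (LinearMap.fst ℝ V (Module.Dual ℝ V)) with hK
    refine ⟨K, ?_⟩
    have hle : L ≤ K.prod K.dualAnnihilator := by
      rintro ⟨v, η⟩ hvη
      refine Submodule.mem_prod.mpr ⟨⟨(v, η), hvη, rfl⟩, ?_⟩
      rw [Submodule.mem_dualAnnihilator]
      rintro w ⟨⟨w', η'⟩, hw', rfl⟩
      exact h1 _ hvη _ hw'
    have heq : L = K.prod K.dualAnnihilator :=
      Submodule.eq_of_le_of_finrank_eq hle (by rw [h2, hfr])
    intro p
    rw [heq]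
    exact Submodule.mem_prod
  · rintro ⟨K, hK⟩
    have heq : L = K.prod K.dualAnnihilator := by
      ext p; rw [hK]; exact (Submodule.mem_prod).symm
    subst heq
    refine ⟨?_, hfr K, ?_⟩
    · rintro p ⟨hp1, hp2⟩ q ⟨hq1, hq2⟩
      exact (Submodule.mem_dualAnnihilator _).mp hp2 _ hq1
    · rintro p ⟨hp1, hp2⟩ q ⟨hq1, hq2⟩
      rw [(Submodule.mem_dualAnnihilator _).mp hp2 _ hq1,
        (Submodule.mem_dualAnnihilator _).mp hq2 _ hp1]
      ring
end
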